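/- Let F and G be disjoint closed subsets of the Sorgenfrey plane with G regular closed (in the Sorgenfrey topology). Then for each n > 0, the Euclidean closure of F_{G,n} = {x ∈ F : P(x, n) ∩ G = ∅} is disjoint from G, where P(x, n) = [x₁, x₁+1/n) × [x₂, x₂+1/n). -/

import Mathlib

open Set

/-- The Sorgenfrey (lower limit) topology on the real line. -/
def sorgLine : TopologicalSpace ℝ :=
  TopologicalSpace.generateFrom {s : Set ℝ | ∃ a b : ℝ, s = Set.Ico a b}

/-- The Sorgenfrey plane: the product of two Sorgenfrey lines. -/
def sorgPlane : TopologicalSpace (ℝ × ℝ) :=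
  @instTopologicalSpaceProd ℝ ℝ sorgLine sorgLine

/-- The basic half-open box of side `1/n` with lower-left corner `x`. -/
noncomputable def SBox (x : ℝ × ℝ) (n : ℕ) : Set (ℝ × ℝ) :=
  Set.Ico x.1 (x.1 + 1 / n) ×ˢ Set.Ico x.2 (x.2 + 1 / n)

lemma sorg_isOpen_iff {s : Set ℝ} :
    @IsOpen ℝ sorgLine s ↔ ∀ x ∈ s, ∃ ε > 0, Set.Ico x (x + ε) ⊆ s := by
  constructor
  · intro h
    have h' : TopologicalSpace.GenerateOpen {s : Set ℝ | ∃ a b : ℝ, s = Set.Ico a b} s := h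
    clear h
    induction h' with
    | basic u hu =>
      rintro x hx
      obtain ⟨a, b, rfl⟩ := hu
      refine ⟨b - x, by linarith [hx.1, hx.2], fun t ht => ⟨le_trans hx.1 ht.1, by linarith [ht.2]⟩⟩
    | univ => exact fun x _ => ⟨1, one_pos, fun _ _ => trivial⟩
    | inter u v _ _ hu hv =>
      intro x hx
      obtain ⟨ε₁, h1, hs1⟩ := hu x hx.1
      obtain ⟨ε₂, h2, hs2⟩ := hv x hx.2
      refine ⟨min ε₁ ε₂, lt_min h1 h2, fun t ht => ⟨hs1 ⟨ht.1, ?_⟩, hs2 ⟨ht.1, ?_⟩⟩⟩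
      · exact ht.2.trans_le (by simp [min_le_left])
      · exact ht.2.trans_le (by simp [min_le_right])
    | sUnion S hS ih =>
      intro x hx
      obtain ⟨u, huS, hxu⟩ := hx
      obtain ⟨ε, hε, hsub⟩ := ih u huS x hxu
      exact ⟨ε, hε, hsub.trans (subset_sUnion_of_mem huS)⟩
  · intro h
    choose ε hε hsub using h
    show TopologicalSpace.GenerateOpen _ s
    have hs : s = ⋃₀ Set.range (fun x : s => Set.Ico (x : ℝ) ((x : ℝ) + ε x x.2)) := by
      ext t
      simp only [Set.mem_sUnion, Set.mem_range, exists_exists_eq_and]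
      constructor
      · intro ht
        exact ⟨⟨t, ht⟩, ⟨le_refl t, by linarith [hε t ht]⟩⟩
      · rintro ⟨x, hx⟩
        exact hsub x x.2 hx
    rw [hs]
    exact .sUnion _ (by rintro _ ⟨x, rfl⟩; exact .basic _ ⟨_, _, rfl⟩)

lemma sorg_Ico_open (a b : ℝ) : @IsOpen ℝ sorgLine (Set.Ico a b) :=
  TopologicalSpace.GenerateOpen.basic _ ⟨a, b, rfl⟩

lemma sorg_box_open (x : ℝ × ℝ) (ε : ℝ) :
    @IsOpen (ℝ × ℝ) sorgPlane (Set.Ico x.1 (x.1 + ε) ×ˢ Set.Ico x.2 (x.2 + ε)) :=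
  @IsOpen.prod ℝ ℝ sorgLine sorgLine _ _ (sorg_Ico_open _ _) (sorg_Ico_open _ _)

lemma sorg_interior_box {G : Set (ℝ × ℝ)} {z : ℝ × ℝ}
    (hz : z ∈ @interior (ℝ × ℝ) sorgPlane G) :
    ∃ δ > 0, Set.Ico z.1 (z.1 + δ) ×ˢ Set.Ico z.2 (z.2 + δ) ⊆ G := by
  obtain ⟨U, hUG, hUo, hzU⟩ := (@mem_interior (ℝ × ℝ) sorgPlane z G).mp hz
  obtain ⟨V, W, hV, hW, hzV, hzW, hVW⟩ :=
    (@isOpen_prod_iff ℝ ℝ sorgLine sorgLine U).mp hUo z.1 z.2 hzU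
  obtain ⟨ε₁, hε₁, h1⟩ := sorg_isOpen_iff.mp hV z.1 hzV
  obtain ⟨ε₂, hε₂, h2⟩ := sorg_isOpen_iff.mp hW z.2 hzW
  refine ⟨min ε₁ ε₂, lt_min hε₁ hε₂, fun t ht => hUG (hVW ⟨?_, ?_⟩)⟩
  · exact h1 ⟨ht.1.1, ht.1.2.trans_le (by simp [min_le_left])⟩
  · exact h2 ⟨ht.2.1, ht.2.2.trans_le (by simp [min_le_right])⟩

/-- Lemma 6 (planar case): if `F` and `G` are disjoint closed subsets of the Sorgenfrey
plane with `G` regular closed, then for each `n > 0` the Euclidean closure of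
`F_{G,n} = {x ∈ F | SBox x n ∩ G = ∅}` is disjoint from `G`. -/
theorem sorgenfrey_lemma (F G : Set (ℝ × ℝ))
    (hF : @IsClosed (ℝ × ℝ) sorgPlane F) (hGc : @IsClosed (ℝ × ℝ) sorgPlane G)
    (hG : G = @closure (ℝ × ℝ) sorgPlane (@interior (ℝ × ℝ) sorgPlane G))
    (hFG : Disjoint F G) (n : ℕ) (hn : 0 < n) :
    Disjoint (closure {x ∈ F | SBox x n ∩ G = ∅}) G := by
  rw [Set.disjoint_left]
  intro y hy hyG
  have hn' : (0 : ℝ) < n := by exact_mod_cast hn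
  -- y is in the Sorgenfrey closure of the Sorgenfrey interior of G
  have hy' : y ∈ @closure (ℝ × ℝ) sorgPlane (@interior (ℝ × ℝ) sorgPlane G) := hG ▸ hyG
  set ε : ℝ := 1 / (2 * n) with hεdef
  have hε : 0 < ε := by positivity
  -- find z in the Sorgenfrey interior of G inside the box [y, y+ε)²
  have hbox : y ∈ Set.Ico y.1 (y.1 + ε) ×ˢ Set.Ico y.2 (y.2 + ε) :=
    ⟨⟨le_refl _, by linarith⟩, ⟨le_refl _, by linarith⟩⟩
  obtain ⟨z, hzB, hzI⟩ :=
    (@mem_closure_iff (ℝ × ℝ) sorgPlane y _).mp hy' _ (sorg_box_open y ε) hbox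
  obtain ⟨δ₀, hδ₀, hδsub⟩ := sorg_interior_box hzI
  set δ : ℝ := min δ₀ (1 / (4 * n)) with hδdef
  have hδpos : 0 < δ := lt_min hδ₀ (by positivity)
  have hδle : δ ≤ 1 / (4 * n) := min_le_right _ _
  have hδle' : δ ≤ δ₀ := min_le_left _ _
  -- w is a point of G strictly above z
  have hwG : ((z.1 + δ / 2, z.2 + δ / 2) : ℝ × ℝ) ∈ G := by
    apply hδsub
    refine ⟨⟨?_, ?_⟩, ?_, ?_⟩ <;> simp <;> linarith
  -- find x ∈ F_{G,n} within δ/2 of y (Euclidean)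
  obtain ⟨x, hxS, hxd⟩ := (Metric.mem_closure_iff (a := y)).mp hy (δ / 2) (by positivity)
  rw [Prod.dist_eq, max_lt_iff] at hxd
  have hd1 : |y.1 - x.1| < δ / 2 := by simpa [Real.dist_eq] using hxd.1
  have hd2 : |y.2 - x.2| < δ / 2 := by simpa [Real.dist_eq] using hxd.2
  rw [abs_lt] at hd1 hd2
  have hz1 : y.1 ≤ z.1 ∧ z.1 < y.1 + ε := ⟨hzB.1.1, hzB.1.2⟩
  have hz2 : y.2 ≤ z.2 ∧ z.2 < y.2 + ε := ⟨hzB.2.1, hzB.2.2⟩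
  -- the key arithmetic fact
  have key : ε + δ < 1 / n := by
    have h4 : (1 : ℝ) / (2 * n) + 1 / (4 * n) < 1 / n := by
      rw [div_add_div _ _ (by positivity) (by positivity), div_lt_div_iff₀ (by positivity) hn']
      ring_nf
      nlinarith
    linarith
  -- w lies in SBox x n, contradicting SBox x n ∩ G = ∅
  have hwBox : ((z.1 + δ / 2, z.2 + δ / 2) : ℝ × ℝ) ∈ SBox x n := by
    refine ⟨⟨?_, ?_⟩, ?_, ?_⟩
    · show x.1 ≤ z.1 + δ / 2
      linarith [hz1.1, hd1.2]
    · show z.1 + δ / 2 < x.1 + 1 / (n : ℝ)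
      linarith [hz1.2, hd1.1, key]
    · show x.2 ≤ z.2 + δ / 2
      linarith [hz2.1, hd2.2]
    · show z.2 + δ / 2 < x.2 + 1 / (n : ℝ)
      linarith [hz2.2, hd2.1, key]
  have : ((z.1 + δ / 2, z.2 + δ / 2) : ℝ × ℝ) ∈ SBox x n ∩ G := ⟨hwBox, hwG⟩
  rw [hxS.2] at this
  exact this
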